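/- arXiv:1004.5505 — 4 statements merged into one kernel-verified Lean document; each statement's English description precedes it below -/
import Mathlib

section
/- For every natural number k ≥ 1, the function X(x) = (1−x)·sin(2πkx) satisfies X''(x) + (2πk)² X(x) = −4πk·cos(2πkx) for all x ∈ [0,1], together with the boundary conditions X(0) = X(1) and X'(1) = 0; that is, X is an associated function of the spectral problem corresponding to the eigenfunction cos(2πkx) and the eigenvalue (2πk)². -/
open Real Set

lemma aux_hasDerivAt (a : ℝ) (x : ℝ) :
    HasDerivAt (fun x : ℝ => (1 - x) * Real.sin (a * x))
      (-Real.sin (a * x) + (1 - x) * (a * Real.cos (a * x))) x := by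
  have h1 : HasDerivAt (fun x : ℝ => (1 - x)) (-1) x := by
    simpa using (hasDerivAt_id' x).const_sub (1:ℝ)
  have h2 : HasDerivAt (fun x : ℝ => Real.sin (a * x)) (a * Real.cos (a * x)) x := by
    have := (Real.hasDerivAt_sin (a * x)).comp x ((hasDerivAt_id x).const_mul a)
    simpa [mul_comm, Function.comp_def] using this
  simpa [neg_one_mul, Pi.mul_def] using h1.mul h2

lemma aux_deriv (a : ℝ) :
    deriv (fun x : ℝ => (1 - x) * Real.sin (a * x))
      = fun x => -Real.sin (a * x) + (1 - x) * (a * Real.cos (a * x)) := by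
  funext x
  exact (aux_hasDerivAt a x).deriv

/-- For every `k ≥ 1`, `X x = (1 - x) · sin (2πkx)` satisfies
`X'' x + (2πk)² X x = -4πk · cos (2πkx)` on `[0,1]`, together with
`X 0 = X 1` and `X' 1 = 0`; i.e. `X` is an associated function of the
spectral problem corresponding to the eigenfunction `cos (2πkx)` and the
eigenvalue `(2πk)²`. -/
theorem stmt_1 (k : ℕ) (hk : 1 ≤ k) :
    (∀ x ∈ Icc (0:ℝ) 1,
        deriv (deriv (fun x : ℝ => (1 - x) * Real.sin (2 * π * k * x))) x
          + (2 * π * k) ^ 2 * ((1 - x) * Real.sin (2 * π * k * x))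
          = -(4 * π * k) * Real.cos (2 * π * k * x)) ∧
    (fun x : ℝ => (1 - x) * Real.sin (2 * π * k * x)) 0
      = (fun x : ℝ => (1 - x) * Real.sin (2 * π * k * x)) 1 ∧
    deriv (fun x : ℝ => (1 - x) * Real.sin (2 * π * k * x)) 1 = 0 := by
  set a : ℝ := 2 * π * k with ha
  have hd1 := aux_deriv a
  have hsin : Real.sin a = 0 := by
    have h : a = (2 * k : ℕ) * π := by push_cast [ha]; ring
    rw [h]; exact Real.sin_nat_mul_pi _
  refine ⟨?_, ?_, ?_⟩
  · intro x hx
    rw [hd1]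
    have h2 : HasDerivAt (fun x : ℝ => -Real.sin (a * x) + (1 - x) * (a * Real.cos (a * x)))
        (-(a * Real.cos (a * x)) + (-(a * Real.cos (a * x)) + (1 - x) * (a * (a * (-Real.sin (a * x)))))) x := by
      have hax : HasDerivAt (fun x : ℝ => a * x) a x := by
        simpa using (hasDerivAt_id x).const_mul a
      have hsin' : HasDerivAt (fun x : ℝ => Real.sin (a * x)) (Real.cos (a * x) * a) x :=
        (Real.hasDerivAt_sin (a * x)).comp x hax
      have hcos' : HasDerivAt (fun x : ℝ => Real.cos (a * x)) (-Real.sin (a * x) * a) x :=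
        (Real.hasDerivAt_cos (a * x)).comp x hax
      have h1m : HasDerivAt (fun x : ℝ => (1 - x)) (-1) x := by
        simpa using (hasDerivAt_id' x).const_sub (1:ℝ)
      have := hsin'.neg.add (h1m.mul (hcos'.const_mul a))
      refine this.congr_deriv ?_
      ring
    rw [h2.deriv]
    ring
  · simp
  · rw [hd1]; simp [hsin]
end

section
/- For all natural numbers k, m ≥ 1, ∫₀¹ 4·cos(2πkx) · x·cos(2πmx) dx equals 1 if k = m and equals 0 if k ≠ m. -/
open Real Set intervalIntegral

lemma key_int (c : ℝ) (hc : c ≠ 0) :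
    ∫ x in (0:ℝ)..1, x * Real.cos (c * x)
      = Real.sin c / c + (Real.cos c - 1) / c ^ 2 := by
  have hderiv : ∀ x ∈ Set.uIcc (0:ℝ) 1,
      HasDerivAt (fun x : ℝ => x * Real.sin (c * x) / c + Real.cos (c * x) / c ^ 2)
        (x * Real.cos (c * x)) x := by
    intro x _
    have h1 : HasDerivAt (fun x : ℝ => c * x) c x := by
      simpa using (hasDerivAt_id x).const_mul c
    have hsin : HasDerivAt (fun x : ℝ => Real.sin (c * x)) (Real.cos (c * x) * c) x :=
      h1.sin
    have hcos : HasDerivAt (fun x : ℝ => Real.cos (c * x)) (-Real.sin (c * x) * c) x :=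
      h1.cos
    have h2 : HasDerivAt (fun x : ℝ => x * Real.sin (c * x))
        (1 * Real.sin (c * x) + x * (Real.cos (c * x) * c)) x :=
      (hasDerivAt_id x).mul hsin
    have := (h2.div_const c).add (hcos.div_const (c ^ 2))
    refine this.congr_deriv ?_
    rw [div_add_div _ _ hc (pow_ne_zero 2 hc), div_eq_iff (mul_ne_zero hc (pow_ne_zero 2 hc))]
    ring
  have hcont : IntervalIntegrable (fun x : ℝ => x * Real.cos (c * x))
      MeasureTheory.volume 0 1 :=
    (continuous_id.mul (Real.continuous_cos.comp (continuous_const.mul continuous_id))).intervalIntegrable _ _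
  rw [intervalIntegral.integral_eq_sub_of_hasDerivAt hderiv hcont]
  simp
  ring

lemma key_zero (n : ℤ) (hn : n ≠ 0) :
    ∫ x in (0:ℝ)..1, x * Real.cos ((2 * π * n) * x) = 0 := by
  have hc : (2 * π * (n : ℝ)) ≠ 0 := by
    have : (n : ℝ) ≠ 0 := Int.cast_ne_zero.mpr hn
    positivity
  rw [key_int _ hc]
  have hs : Real.sin (2 * π * n) = 0 := by
    rw [show 2 * π * (n : ℝ) = ((2 * n : ℤ) : ℝ) * π by push_cast; ring]
    exact Real.sin_int_mul_pi (2 * n)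
  have hcs : Real.cos (2 * π * n) = 1 := by
    rw [show 2 * π * (n : ℝ) = (n : ℝ) * (2 * π) by ring]
    exact Real.cos_int_mul_two_pi n
  rw [hs, hcs]
  simp

/-- Biorthonormality of the odd-indexed elements:
`∫₀¹ 4 cos(2πkx) · x cos(2πmx) dx = δ_{km}` for `k, m ≥ 1`. -/
theorem stmt_4 (k m : ℕ) (hk : 1 ≤ k) (hm : 1 ≤ m) :
    ∫ x in (0:ℝ)..1,
        (4 * Real.cos (2 * π * k * x)) * (x * Real.cos (2 * π * m * x))
      = if k = m then 1 else 0 := by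
  have hrw : ∀ x : ℝ, (4 * Real.cos (2 * π * k * x)) * (x * Real.cos (2 * π * m * x))
      = 2 * (x * Real.cos ((2 * π * ((k : ℝ) - m)) * x))
        + 2 * (x * Real.cos ((2 * π * ((k : ℝ) + m)) * x)) := by
    intro x
    rw [show (2 * π * ((k : ℝ) - m)) * x = 2 * π * k * x - 2 * π * m * x by ring,
        show (2 * π * ((k : ℝ) + m)) * x = 2 * π * k * x + 2 * π * m * x by ring,
        Real.cos_sub, Real.cos_add]
    ring
  simp_rw [hrw]
  have hint : ∀ d : ℝ, IntervalIntegrable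
      (fun x : ℝ => 2 * (x * Real.cos ((2 * π * d) * x))) MeasureTheory.volume 0 1 := by
    intro d
    exact (Continuous.intervalIntegrable (by continuity) _ _)
  rw [intervalIntegral.integral_add (hint ((k:ℝ) - m)) (hint ((k:ℝ) + m)),
      intervalIntegral.integral_const_mul, intervalIntegral.integral_const_mul]
  have hsum : ∫ x in (0:ℝ)..1, x * Real.cos ((2 * π * ((k : ℝ) + m)) * x) = 0 := by
    rw [show ((k : ℝ) + m) = (((k : ℤ) + m : ℤ) : ℝ) by push_cast; ring]
    exact key_zero _ (by omega)
  by_cases h : k = m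
  · subst h
    simp only [sub_self, mul_zero, zero_mul, Real.cos_zero, mul_one, if_pos rfl]
    rw [hsum, integral_id]
    norm_num
  · have hdiff : ∫ x in (0:ℝ)..1, x * Real.cos ((2 * π * ((k : ℝ) - m)) * x) = 0 := by
      rw [show ((k : ℝ) - m) = (((k : ℤ) - m : ℤ) : ℝ) by push_cast; ring]
      refine key_zero _ ?_
      simp only [ne_eq, sub_eq_zero]
      exact_mod_cast fun hkm => h (by exact_mod_cast hkm)
    rw [hdiff, hsum, if_neg h]
    ring
end

section
/- For all natural numbers k, m ≥ 1, ∫₀¹ 4(1−x)·sin(2πkx) · sin(2πmx) dx equals 1 if k = m and equals 0 if k ≠ m. -/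
open Real Set intervalIntegral

lemma aux_cos_int (n : ℤ) :
    ∫ x in (0:ℝ)..1, (1 - x) * Real.cos (2 * π * n * x)
      = if n = 0 then 1/2 else 0 := by
  rcases eq_or_ne n 0 with h | h
  · subst h
    simp only [Int.cast_zero, mul_zero, zero_mul, Real.cos_zero, mul_one, if_true]
    rw [intervalIntegral.integral_sub intervalIntegrable_const intervalIntegrable_id,
      integral_id]
    simp
    norm_num
  · rw [if_neg h]
    set c : ℝ := 2 * π * n with hc
    have hc0 : c ≠ 0 := by
      apply mul_ne_zero (mul_ne_zero two_ne_zero Real.pi_ne_zero)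
      exact_mod_cast h
    have key : ∀ x ∈ uIcc (0:ℝ) 1,
        HasDerivAt (fun y : ℝ => (1 - y) * Real.sin (c * y) / c - Real.cos (c * y) / c ^ 2)
          ((1 - x) * Real.cos (c * x)) x := by
      intro x _
      have hs : HasDerivAt (fun y : ℝ => Real.sin (c * y)) (Real.cos (c * x) * c) x := by
        simpa [Function.comp_def] using (Real.hasDerivAt_sin (c * x)).comp x ((hasDerivAt_id x).const_mul c)
      have hco : HasDerivAt (fun y : ℝ => Real.cos (c * y)) (-Real.sin (c * x) * c) x := by
        simpa [Function.comp_def] using (Real.hasDerivAt_cos (c * x)).comp x ((hasDerivAt_id x).const_mul c)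
      have h1 : HasDerivAt (fun y : ℝ => (1 - y)) (-1 : ℝ) x := by
        simpa [Pi.sub_def] using (hasDerivAt_const x (1:ℝ)).sub (hasDerivAt_id x)
      have := ((h1.mul hs).div_const c).sub (hco.div_const (c ^ 2))
      refine this.congr_deriv ?_
      field_simp
      ring
    have cont : ContinuousOn (fun x : ℝ => (1 - x) * Real.cos (c * x)) (uIcc (0:ℝ) 1) := by
      fun_prop
    rw [intervalIntegral.integral_eq_sub_of_hasDerivAt key (cont.intervalIntegrable)]
    have h2 : Real.cos (c * 1) = 1 := by
      rw [hc]
      have : 2 * π * (n:ℝ) * 1 = (n:ℝ) * (2 * π) := by ring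
      rw [this, Real.cos_int_mul_two_pi]
    have h3 : Real.sin (c * 1) = 0 := by
      rw [hc]
      have : 2 * π * (n:ℝ) * 1 = (2 * n : ℤ) * π := by push_cast; ring
      rw [this, Real.sin_int_mul_pi]
    have h2' : Real.cos c = 1 := by simpa using h2
    have h3' : Real.sin c = 0 := by simpa using h3
    simp [h2', h3']

/-- Biorthonormality of the even-indexed elements:
`∫₀¹ 4(1-x) sin(2πkx) · sin(2πmx) dx = δ_{km}` for `k, m ≥ 1`. -/
theorem stmt_5 (k m : ℕ) (hk : 1 ≤ k) (hm : 1 ≤ m) :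
    ∫ x in (0:ℝ)..1,
        (4 * (1 - x) * Real.sin (2 * π * k * x)) * Real.sin (2 * π * m * x)
      = if k = m then 1 else 0 := by
  set n₁ : ℤ := (k:ℤ) - m with hn₁
  set n₂ : ℤ := (k:ℤ) + m with hn₂
  have key : ∀ x : ℝ,
      (4 * (1 - x) * Real.sin (2 * π * k * x)) * Real.sin (2 * π * m * x)
        = 2 * ((1 - x) * Real.cos (2 * π * (n₁ : ℝ) * x))
          - 2 * ((1 - x) * Real.cos (2 * π * (n₂ : ℝ) * x)) := by
    intro x
    have h := Real.cos_sub_cos (2 * π * (n₁ : ℝ) * x) (2 * π * (n₂ : ℝ) * x)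
    have e1 : (2 * π * (n₁ : ℝ) * x + 2 * π * (n₂ : ℝ) * x) / 2
        = 2 * π * k * x := by rw [hn₁, hn₂]; push_cast; ring
    have e2 : (2 * π * (n₁ : ℝ) * x - 2 * π * (n₂ : ℝ) * x) / 2
        = -(2 * π * m * x) := by rw [hn₁, hn₂]; push_cast; ring
    rw [e1, e2, Real.sin_neg] at h
    linear_combination (-2) * (1 - x) * h
  rw [intervalIntegral.integral_congr (fun x _ => key x)]
  have i1 : IntervalIntegrable
      (fun x : ℝ => 2 * ((1 - x) * Real.cos (2 * π * (n₁ : ℝ) * x))) MeasureTheory.volume 0 1 := by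
    apply Continuous.intervalIntegrable; fun_prop
  have i2 : IntervalIntegrable
      (fun x : ℝ => 2 * ((1 - x) * Real.cos (2 * π * (n₂ : ℝ) * x))) MeasureTheory.volume 0 1 := by
    apply Continuous.intervalIntegrable; fun_prop
  rw [intervalIntegral.integral_sub i1 i2, intervalIntegral.integral_const_mul,
    intervalIntegral.integral_const_mul, aux_cos_int, aux_cos_int]
  have hkm : n₂ ≠ 0 := by omega
  rw [if_neg hkm]
  rcases eq_or_ne k m with h | h
  · rw [if_pos h, if_pos (show n₁ = 0 by omega)]; norm_num
  · rw [if_neg h, if_neg (show n₁ ≠ 0 by omega)]; norm_num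
end

section
/- Let T > 0, E(t) = exp(−t)/(2π), F(x,t) = (1−x)·sin(2πx)·exp(3t), and φ(x) = (1−x)·sin(2πx), with Fourier coefficients φ_{2k} = ∫₀¹ φ(x)·sin(2πkx) dx and F₀(t) = ∫₀¹ F(x,t)·x dx. Then the quantity C₂ = ∫₀ᵀ E'(t) dt + Σ_{k=1}^{∞} (2/(πk))·φ_{2k} − 2∫₀ᵀ F₀(t) dt equals exp(−T)/(2π), and in particular C₂ > 0. -/
open Real Set intervalIntegral

lemma hda_sin (c x : ℝ) : HasDerivAt (fun y => Real.sin (c * y)) (c * Real.cos (c * x)) x := by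
  have h := (Real.hasDerivAt_sin (c * x)).comp x ((hasDerivAt_id x).const_mul c)
  simp only [mul_comm, id, mul_one] at h
  exact h

lemma hda_cos (c x : ℝ) : HasDerivAt (fun y => Real.cos (c * y)) (-(c * Real.sin (c * x))) x := by
  have h := (Real.hasDerivAt_cos (c * x)).comp x ((hasDerivAt_id x).const_mul c)
  simp only [mul_comm, id, mul_one, mul_neg] at h
  exact h

lemma intCos (c : ℝ) (hc : c ≠ 0) :
    ∫ x in (0:ℝ)..1, (1 - x) * Real.cos (c * x) = (1 - Real.cos c) / c ^ 2 := by
  have h : ∀ x ∈ Set.uIcc (0:ℝ) 1,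
      HasDerivAt (fun y => (1 - y) * Real.sin (c * y) / c - Real.cos (c * y) / c ^ 2)
        ((1 - x) * Real.cos (c * x)) x := by
    intro x _
    have h1 : HasDerivAt (fun y : ℝ => 1 - y) (-1) x := by
      simpa using (hasDerivAt_id x).const_sub 1
    have h2 := (h1.mul (hda_sin c x)).div_const c
    have h3 := (hda_cos c x).div_const (c ^ 2)
    refine (h2.sub h3).congr_deriv ?_
    field_simp
    ring
  rw [intervalIntegral.integral_eq_sub_of_hasDerivAt h
    (((continuous_const.sub continuous_id).mul
      (Real.continuous_cos.comp (continuous_const.mul continuous_id))).intervalIntegrable 0 1)]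
  field_simp
  norm_num
  ring

lemma intXSin (c : ℝ) (hc : c ≠ 0) :
    ∫ x in (0:ℝ)..1, (x - x ^ 2) * Real.sin (c * x) = -Real.sin c / c ^ 2 + 2 * (1 - Real.cos c) / c ^ 3 := by
  have h : ∀ x ∈ Set.uIcc (0:ℝ) 1,
      HasDerivAt (fun y => -((y - y ^ 2) * Real.cos (c * y)) / c
          + (1 - 2 * y) * Real.sin (c * y) / c ^ 2 - 2 * Real.cos (c * y) / c ^ 3)
        ((x - x ^ 2) * Real.sin (c * x)) x := by
    intro x _
    have h1 : HasDerivAt (fun y : ℝ => y - y ^ 2) (1 - 2 * x) x := by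
      have h := (hasDerivAt_id' x).sub ((hasDerivAt_pow 2 x))
      simp at h
      exact h
    have h2 := ((h1.mul (hda_cos c x)).neg).div_const c
    have h3 : HasDerivAt (fun y : ℝ => 1 - 2 * y) (-2) x := by
      simpa using ((hasDerivAt_id x).const_mul 2).const_sub 1
    have h4 := (h3.mul (hda_sin c x)).div_const (c ^ 2)
    have h5 := ((hda_cos c x).const_mul 2).div_const (c ^ 3)
    refine ((h2.add h4).sub h5).congr_deriv ?_
    field_simp
    ring
  rw [intervalIntegral.integral_eq_sub_of_hasDerivAt h
    (((continuous_id.sub (continuous_pow 2)).mul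
      (Real.continuous_sin.comp (continuous_const.mul continuous_id))).intervalIntegrable 0 1)]
  field_simp
  norm_num
  ring

lemma intOneSub : ∫ x in (0:ℝ)..1, (1 - x) = 1 / 2 := by
  rw [intervalIntegral.integral_sub (intervalIntegrable_const) (intervalIntegral.intervalIntegrable_id)]
  simp [integral_id]
  norm_num

lemma phi1 : ∫ x in (0:ℝ)..1, ((1 - x) * Real.sin (2 * π * x)) * Real.sin (2 * π * x) = 1 / 4 := by
  have hcong : ∀ x ∈ Set.uIcc (0:ℝ) 1,
      ((1 - x) * Real.sin (2 * π * x)) * Real.sin (2 * π * x)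
        = (1 / 2) * (1 - x) - (1 / 2) * ((1 - x) * Real.cos ((4 * π) * x)) := by
    intro x _
    have h := Real.sin_sq_add_cos_sq (2 * π * x)
    have h2 : Real.cos (4 * π * x) = 2 * Real.cos (2 * π * x) ^ 2 - 1 := by
      rw [show (4 * π * x) = 2 * (2 * π * x) by ring]; exact Real.cos_two_mul _
    linear_combination (1 - x) * h + ((1 - x) / 2) * h2
  rw [intervalIntegral.integral_congr hcong]
  have hi1 : IntervalIntegrable (fun x : ℝ => (1/2) * (1 - x)) MeasureTheory.volume 0 1 :=
    ((continuous_const.mul (continuous_const.sub continuous_id)).intervalIntegrable 0 1)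
  have hi2 : IntervalIntegrable (fun x : ℝ => (1/2) * ((1 - x) * Real.cos ((4*π) * x)))
      MeasureTheory.volume 0 1 :=
    ((continuous_const.mul ((continuous_const.sub continuous_id).mul
      (Real.continuous_cos.comp (continuous_const.mul continuous_id)))).intervalIntegrable 0 1)
  have hcos : Real.cos (4 * π) = 1 := by
    rw [show (4 * π) = ((2:ℕ) : ℝ) * (2 * π) by push_cast; ring]
    exact Real.cos_nat_mul_two_pi 2
  rw [intervalIntegral.integral_sub hi1 hi2, intervalIntegral.integral_const_mul,
    intervalIntegral.integral_const_mul, intOneSub, intCos (4 * π) (by positivity), hcos]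
  norm_num

lemma phik (k : ℕ) (hk : 2 ≤ k) :
    ∫ x in (0:ℝ)..1, ((1 - x) * Real.sin (2 * π * x)) * Real.sin (2 * π * (k : ℝ) * x) = 0 := by
  have hk1 : (2:ℝ) ≤ (k : ℝ) := by exact_mod_cast hk
  have hπ := Real.pi_pos
  have hc1 : (2 * π * ((k : ℝ) - 1)) ≠ 0 := by nlinarith
  have hc2 : (2 * π * ((k : ℝ) + 1)) ≠ 0 := by nlinarith
  have hcong : ∀ x ∈ Set.uIcc (0:ℝ) 1,
      ((1 - x) * Real.sin (2 * π * x)) * Real.sin (2 * π * (k : ℝ) * x)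
        = (1 / 2) * ((1 - x) * Real.cos ((2 * π * ((k : ℝ) - 1)) * x))
          - (1 / 2) * ((1 - x) * Real.cos ((2 * π * ((k : ℝ) + 1)) * x)) := by
    intro x _
    rw [show (2 * π * ((k : ℝ) - 1)) * x = 2 * π * (k : ℝ) * x - 2 * π * x by ring,
      show (2 * π * ((k : ℝ) + 1)) * x = 2 * π * (k : ℝ) * x + 2 * π * x by ring,
      Real.cos_sub, Real.cos_add]
    ring
  rw [intervalIntegral.integral_congr hcong]
  have hi : ∀ c : ℝ, IntervalIntegrable (fun x : ℝ => (1/2) * ((1 - x) * Real.cos (c * x)))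
      MeasureTheory.volume 0 1 := fun c =>
    ((continuous_const.mul ((continuous_const.sub continuous_id).mul
      (Real.continuous_cos.comp (continuous_const.mul continuous_id)))).intervalIntegrable 0 1)
  have hcosm : ∀ m : ℕ, Real.cos (2 * π * (m : ℝ)) = 1 := by
    intro m
    rw [show 2 * π * (m : ℝ) = (m : ℝ) * (2 * π) by ring]
    exact Real.cos_nat_mul_two_pi m
  have e1 : Real.cos (2 * π * ((k : ℝ) - 1)) = 1 := by
    have : ((k : ℝ) - 1) = ((k - 1 : ℕ) : ℝ) := by
      have := Nat.one_le_of_lt hk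
      push_cast [Nat.cast_sub this]
      ring
    rw [this]; exact hcosm _
  have e2 : Real.cos (2 * π * ((k : ℝ) + 1)) = 1 := by
    have : ((k : ℝ) + 1) = ((k + 1 : ℕ) : ℝ) := by push_cast; ring
    rw [this]; exact hcosm _
  rw [intervalIntegral.integral_sub (hi _) (hi _), intervalIntegral.integral_const_mul,
    intervalIntegral.integral_const_mul, intCos _ hc1, intCos _ hc2, e1, e2]
  simp

lemma F0zero (t : ℝ) :
    ∫ x in (0:ℝ)..1, ((1 - x) * Real.sin (2 * π * x) * Real.exp (3 * t)) * x = 0 := by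
  have hcong : ∀ x ∈ Set.uIcc (0:ℝ) 1,
      ((1 - x) * Real.sin (2 * π * x) * Real.exp (3 * t)) * x
        = Real.exp (3 * t) * ((x - x ^ 2) * Real.sin ((2 * π) * x)) := by
    intro x _; ring
  rw [intervalIntegral.integral_congr hcong, intervalIntegral.integral_const_mul,
    intXSin (2 * π) (by positivity), Real.cos_two_pi, Real.sin_two_pi]
  simp

/-- For the example data `E(t) = e^{-t}/(2π)`, `F(x,t) = (1-x) sin(2πx) e^{3t}`,
`φ(x) = (1-x) sin(2πx)`, the quantity
`C₂ = ∫₀ᵀ E'(t) dt + Σ_{k=1}^∞ (2/(πk)) φ_{2k} - 2 ∫₀ᵀ F₀(t) dt`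
equals `e^{-T}/(2π)`; in particular `C₂ > 0`. -/
theorem stmt_17 (T : ℝ) (hT : 0 < T)
    (E : ℝ → ℝ) (F : ℝ → ℝ → ℝ) (φ : ℝ → ℝ)
    (hE : E = fun t => Real.exp (-t) / (2 * π))
    (hF : F = fun x t => (1 - x) * Real.sin (2 * π * x) * Real.exp (3 * t))
    (hφ : φ = fun x => (1 - x) * Real.sin (2 * π * x))
    (φ₂ : ℕ → ℝ)
    (hφ₂ : ∀ k : ℕ, φ₂ k = ∫ x in (0:ℝ)..1, φ x * Real.sin (2 * π * k * x))
    (F₀ : ℝ → ℝ)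
    (hF₀ : ∀ t : ℝ, F₀ t = ∫ x in (0:ℝ)..1, F x t * x)
    (C₂ : ℝ)
    (hC₂ : C₂ = (∫ t in (0:ℝ)..T, deriv E t)
      + (∑' k : ℕ, (2 / (π * (k + 1))) * φ₂ (k + 1))
      - 2 * ∫ t in (0:ℝ)..T, F₀ t) :
    C₂ = Real.exp (-T) / (2 * π) ∧ 0 < C₂ := by
  subst hE hF hφ
  have hπ := Real.pi_pos
  -- the derivative integral
  have hEder : ∀ t : ℝ, HasDerivAt (fun t => Real.exp (-t) / (2 * π))
      (-Real.exp (-t) / (2 * π)) t := by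
    intro t
    have h := ((Real.hasDerivAt_exp (-t)).comp t ((hasDerivAt_id t).neg)).div_const (2 * π)
    refine h.congr_deriv ?_
    ring
  have hderiv : deriv (fun t => Real.exp (-t) / (2 * π)) = fun t => -Real.exp (-t) / (2 * π) :=
    funext fun t => (hEder t).deriv
  have hI1 : (∫ t in (0:ℝ)..T, deriv (fun t => Real.exp (-t) / (2 * π)) t)
      = Real.exp (-T) / (2 * π) - 1 / (2 * π) := by
    rw [hderiv, intervalIntegral.integral_eq_sub_of_hasDerivAt (fun t _ => hEder t)
      (((Real.continuous_exp.comp continuous_neg).neg.div_const (2 * π)).intervalIntegrable 0 T)]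
    simp [Real.exp_zero]
  -- the series
  have h1 : φ₂ 1 = 1 / 4 := by
    rw [hφ₂ 1]
    simpa using phi1
  have hk0 : ∀ k : ℕ, k ≠ 0 → φ₂ (k + 1) = 0 := by
    intro k hk
    rw [hφ₂ (k + 1)]
    simpa using phik (k + 1) (by omega)
  have hsum : (∑' k : ℕ, (2 / (π * (k + 1))) * φ₂ (k + 1)) = 1 / (2 * π) := by
    rw [tsum_eq_single 0 (fun b hb => by rw [hk0 b hb]; ring)]
    rw [show (0:ℕ) + 1 = 1 from rfl, h1]
    push_cast
    field_simp
    ring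
  -- F₀ vanishes
  have hF0 : F₀ = fun _ => 0 := by
    funext t
    rw [hF₀ t]
    simpa using F0zero t
  rw [hF0] at hC₂
  simp only [intervalIntegral.integral_zero, mul_zero, sub_zero] at hC₂
  rw [hI1, hsum] at hC₂
  have heq : C₂ = Real.exp (-T) / (2 * π) := by rw [hC₂]; ring
  refine ⟨heq, ?_⟩
  rw [heq]
  positivity
end
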